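/- For the labeled de Bruijn graph G described in the context and the i.i.d. source (Xᵢ) with Xᵢ uniformly distributed on A = {a,b,c,d}, the asymptotic expected Hamming distortion per sample equals D(G) = lim_{n→∞} n⁻¹ E[ min over all directed paths (e₁,…,eₙ) of length n in G of Σ_{i=1}^{n} d(Xᵢ, L(eᵢ)) ] = 452/1809. -/

import Mathlib

/-- Hamming distance on the alphabet `A`. -/
def ham {A : Type*} [DecidableEq A] (x y : A) : ℕ := if x = y then 0 else 1

/-- `EdgeChain src dst n e` : the first `n` edges of the edge sequence `e` form a
directed path in the labelled graph with source map `src` and destination map `dst`. -/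
def EdgeChain {V E : Type*} (src dst : E → V) (n : ℕ) (e : ℕ → E) : Prop :=
  ∀ i : ℕ, i + 1 < n → dst (e i) = src (e (i + 1))

/-- The graph is strongly connected: for any ordered pair of vertices there is a
(nonempty) directed path from the first to the second. -/
def StronglyConnected {V E : Type*} (src dst : E → V) : Prop :=
  ∀ u v : V, ∃ (l : List E) (h : l ≠ []),
    List.Chain' (fun e f => dst e = src f) l ∧ src (l.head h) = u ∧ dst (l.getLast h) = v

/-- The Viterbi transition operator `V` : `Vop src dst lab s x v` is the minimum of
`s (src e) + d(x, lab e)` over all edges `e` ending at `v`. -/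
noncomputable def Vop {V E A : Type*} [DecidableEq A] (src dst : E → V) (lab : E → A)
    (s : V → ℕ) (x : A) : V → ℕ :=
  fun v => sInf {m : ℕ | ∃ e : E, dst e = v ∧ m = s (src e) + ham x (lab e)}

/-- Minimum component of a state. -/
noncomputable def minS {V : Type*} (s : V → ℕ) : ℕ := sInf (Set.range s)

/-- The reduced Viterbi transition operator `Ṽ`: subtract from `V(s,x)` its minimum
component. -/
noncomputable def Vred {V E A : Type*} [DecidableEq A] (src dst : E → V) (lab : E → A)
    (s : V → ℕ) (x : A) : V → ℕ :=
  fun v => Vop src dst lab s x v - minS (Vop src dst lab s x)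

/-- The Viterbi state sequence: `S⁰` is the zero state and `Sⁱ = V(S^{i-1}, xᵢ)`
(the letter `xᵢ` of the paper is `x (i-1)` here). -/
noncomputable def VSeq {V E A : Type*} [DecidableEq A] (src dst : E → V) (lab : E → A)
    (x : ℕ → A) : ℕ → V → ℕ
  | 0 => fun _ => 0
  | i + 1 => Vop src dst lab (VSeq src dst lab x i) (x i)

/-- The reduced Viterbi state sequence `S̃ⁱ(v) = Sⁱ(v) - min Sⁱ`. -/
noncomputable def SredSeq {V E A : Type*} [DecidableEq A] (src dst : E → V) (lab : E → A)
    (x : ℕ → A) (i : ℕ) : V → ℕ :=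
  fun v => VSeq src dst lab x i v - minS (VSeq src dst lab x i)

/-- The state space `𝒮_G`: the zero state together with everything obtainable from it
by finitely many applications of the reduced Viterbi transition operator. -/
def SG {V E A : Type*} [DecidableEq A] (src dst : E → V) (lab : E → A) : Set (V → ℕ) :=
  { s | ∃ l : List A, s = l.foldl (Vred src dst lab) (fun _ => 0) }

/-- `PrimIndex src dst k` : `k` is positive and any vertex can be reached from any
vertex by a directed path of length exactly `k`. -/
def PrimIndex {V E : Type*} (src dst : E → V) (k : ℕ) : Prop :=
  0 < k ∧ ∀ u v : V, ∃ e : ℕ → E,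
    EdgeChain src dst k e ∧ src (e 0) = u ∧ dst (e (k - 1)) = v

/-- Minimum total Hamming distortion over all directed paths of length `n`. -/
noncomputable def minDist {V E A : Type*} [DecidableEq A] (src dst : E → V) (lab : E → A)
    (n : ℕ) (x : Fin n → A) : ℕ :=
  sInf {m : ℕ | ∃ e : ℕ → E, EdgeChain src dst n e ∧
    m = ∑ i : Fin n, ham (x i) (lab (e i.1))}

/-- `aSeq src dst lab p n` is the expected minimum path distortion
`a_n = E[ min_{paths} Σ d(Xᵢ, L(eᵢ)) ]` for the i.i.d. source with letter distribution `p`. -/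
noncomputable def aSeq {V E A : Type*} [DecidableEq A] [Fintype A] (src dst : E → V)
    (lab : E → A) (p : A → ℝ) (n : ℕ) : ℝ :=
  ∑ x : Fin n → A, (∏ i, p (x i)) * (minDist src dst lab n x : ℝ)

/-- Source map of the labelled de Bruijn graph of size 8: edge `(v, j)` (for `j = 0, 1`)
is the `j`-th outgoing edge of vertex `v` (vertices `v₁,…,v₈` are `0,…,7`). -/
def dbSrc : Fin 8 × Fin 2 → Fin 8 := fun e => e.1

/-- Destination map of the de Bruijn graph: edge `(v, j)` goes to vertex `2v + j (mod 8)`,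
i.e. `v₁ → v₁,v₂`, `v₂ → v₃,v₄`, `v₃ → v₅,v₆`, `v₄ → v₇,v₈`, `v₅ → v₁,v₂`,
`v₆ → v₃,v₄`, `v₇ → v₅,v₆`, `v₈ → v₇,v₈`. -/
def dbDst : Fin 8 × Fin 2 → Fin 8 :=
  fun e => ⟨(2 * e.1.1 + e.2.1) % 8, Nat.mod_lt _ (by norm_num)⟩

/-- Labels of the de Bruijn graph: the alphabet `A = {a,b,c,d}` is `Fin 4` with
`a = 0`, `b = 1`, `c = 2`, `d = 3`; row `v` lists the labels of the two outgoing
edges of vertex `v`. -/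
def dbLab : Fin 8 × Fin 2 → Fin 4 :=
  fun e => ![![0, 1], ![1, 0], ![2, 3], ![3, 2], ![1, 0], ![0, 1], ![3, 2], ![2, 3]] e.1 e.2


def stl : List ℕ := [0, 21760, 85, 21780, 21825, 5205, 16725, 23124, 23121, 5541, 17829, 42261, 42309, 21594, 20826, 43620, 43665, 80, 43545, 43590, 5, 1280, 18090, 6570, 20480, 37290, 25770, 44900, 44945, 5456, 17744, 64025, 64070, 21509, 20741, 1364, 1361, 6650, 18170, 20501, 20549, 25775, 37295, 23060, 23105, 17749, 5461, 42260, 42305, 20821, 21589, 21841, 21844, 5285, 16805, 21829, 21781, 5210, 16730, 23140, 23185, 42265, 42310, 20906, 21674, 17834, 5546, 6565, 18085, 25690, 37210, 43589, 43541, 43601, 43604, 336, 1104, 16389, 4101, 1344, 1296, 20481, 20484, 16645, 5125, 16720, 5200, 20545, 20500, 1345, 1300, 21764, 21761, 21776, 21824, 4181, 16469, 1109, 341, 4186, 16474, 1189, 421, 42244, 42241, 23056, 23104]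
def trl : List ℕ := [4227201, 12665347, 10584452, 21120007, 29574667, 19039112, 27493772, 35932175, 42273170, 48597653, 54938648, 46516885, 52857880, 35932048, 42273043, 63393307, 71847967, 10584193, 80302627, 88757287, 4227460, 4227587, 86676392, 78221732, 12664961, 69767072, 61312412, 63393307, 71847967, 97211947, 105666607, 80302627, 88757287, 114121267, 122575927, 112040372, 120495032, 78221732, 86676392, 95131052, 103585712, 61312412, 69767072, 21126715, 29581117, 135253016, 139479701, 143705095, 147932683, 42280007, 35939657, 42279880, 35939530, 141624200, 145851788, 133172248, 137398933, 19045820, 27500222, 160614415, 164841874, 46524495, 52865361, 177522963, 181749648, 54946903, 48606553, 48605136, 54946002, 158533520, 162760979, 52866008, 46525658, 175442322, 179669007, 10595931, 10596189, 202883460, 207110532, 200802819, 205029891, 12676572, 12676830, 211344439, 215570995, 105673831, 97219945, 103592936, 95139050, 209263544, 213490100, 114121140, 122575800, 95131179, 103585839, 97211820, 105666480, 112040499, 120495159, 97211820, 105666480, 112040499, 120495159, 114121140, 122575800, 95131179, 103585839]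
def gl : List ℕ := [0, 0, 0, 0, 0, 0, 0, 80, 80, 5, 5, 5, 5, 80, 80, 80, 80, 0, 5, 5, 0, 0, 5, 5, 0, 80, 80, 80, 80, 0, 0, 5, 5, 0, 0, 0, 0, 5, 5, 0, 0, 80, 80, 0, 0, 5, 5, 0, 0, 80, 80, 80, 80, 0, 0, 5, 5, 0, 0, 80, 80, 5, 5, 80, 80, 5, 5, 5, 5, 80, 80, 5, 5, 80, 80, 0, 0, 0, 0, 0, 0, 0, 0, 0, 0, 0, 0, 0, 0, 0, 0, 0, 0, 0, 0, 0, 0, 0, 0, 0, 0, 0, 0, 0, 0, 0, 0]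
def Hl : List ℕ := [0, 452, 452, 904, 904, 904, 904, 1356, 1356, 1356, 1356, 1356, 1356, 1356, 1356, 1581, 1581, 226, 1581, 1581, 226, 226, 1581, 1581, 226, 1581, 1581, 1581, 1581, 676, 676, 1581, 1581, 676, 676, 676, 676, 1581, 1581, 676, 676, 1581, 1581, 932, 932, 1324, 1324, 932, 932, 1324, 1324, 1324, 1324, 932, 932, 1324, 1324, 932, 932, 1412, 1412, 1412, 1412, 1517, 1517, 1517, 1517, 1412, 1412, 1412, 1412, 1517, 1517, 1517, 1517, 338, 338, 338, 338, 338, 338, 338, 338, 548, 548, 548, 548, 548, 548, 548, 548, 676, 676, 676, 676, 676, 676, 676, 676, 676, 676, 676, 676, 676, 676, 676, 676]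

def psiF : Fin 107 → Fin 8 → ℕ := fun i v => stl.getD i.1 0 / 4 ^ v.1 % 4
def trF : Fin 107 → Fin 4 → Fin 107 :=
  fun i a => ⟨trl.getD i.1 0 / 128 ^ a.1 % 128 % 107, Nat.mod_lt _ (by norm_num)⟩
def gF : Fin 107 → Fin 4 → ℕ := fun i a => gl.getD i.1 0 / 4 ^ a.1 % 4
def HF : Fin 107 → ℕ := fun i => Hl.getD i.1 0
def e1 : Fin 8 → Fin 8 × Fin 2 := fun u => (⟨u.1 / 2, by have := u.isLt; omega⟩, ⟨u.1 % 2, by omega⟩)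
def e2 : Fin 8 → Fin 8 × Fin 2 := fun u => (⟨u.1 / 2 + 4, by have := u.isLt; omega⟩, ⟨u.1 % 2, by omega⟩)
def cVop (s : Fin 8 → ℕ) (a : Fin 4) : Fin 8 → ℕ := fun u =>
  min (s (e1 u).1 + ham a (dbLab (e1 u))) (s (e2 u).1 + ham a (dbLab (e2 u)))
def cMin (s : Fin 8 → ℕ) : ℕ :=
  min (s 0) (min (s 1) (min (s 2) (min (s 3) (min (s 4) (min (s 5) (min (s 6) (s 7)))))))

set_option maxRecDepth 10000 in
theorem F1 : ∀ (i : Fin 107) (a : Fin 4) (v : Fin 8),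
    cVop (psiF i) a v - cMin (cVop (psiF i) a) = psiF (trF i a) v := by decide
set_option maxRecDepth 10000 in
theorem F2 : ∀ (i : Fin 107) (a : Fin 4), cMin (cVop (psiF i) a) = gF i a := by decide
theorem F3 : ∀ v, psiF 0 v = 0 := by decide
theorem F4 : ∀ i : Fin 107, 4 * HF i + 1808 =
    1809 * (gF i 0 + gF i 1 + gF i 2 + gF i 3) + (HF (trF i 0) + HF (trF i 1) + HF (trF i 2) + HF (trF i 3)) := by decide
theorem F5 : ∀ i, HF i ≤ 1581 := by decide
theorem Gd1 : ∀ u, dbDst (e1 u) = u ∧ dbDst (e2 u) = u := by decide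
theorem Gd2 : ∀ (e : Fin 8 × Fin 2) (u : Fin 8), dbDst e = u → e = e1 u ∨ e = e2 u := by decide

section Theory
open Finset

abbrev dS := dbSrc
abbrev dD := dbDst
abbrev dL := dbLab

lemma vop_eq (s : Fin 8 → ℕ) (a : Fin 4) : Vop dbSrc dbDst dbLab s a = cVop s a := by
  funext u
  have hset : {m : ℕ | ∃ e, dbDst e = u ∧ m = s (dbSrc e) + ham a (dbLab e)}
      = {s (e1 u).1 + ham a (dbLab (e1 u)), s (e2 u).1 + ham a (dbLab (e2 u))} := by
    ext m
    simp only [Set.mem_setOf_eq, Set.mem_insert_iff, Set.mem_singleton_iff]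
    constructor
    · rintro ⟨e, hd, rfl⟩
      rcases Gd2 e u hd with rfl | rfl
      · exact Or.inl rfl
      · exact Or.inr rfl
    · rintro (rfl | rfl)
      · exact ⟨e1 u, (Gd1 u).1, rfl⟩
      · exact ⟨e2 u, (Gd1 u).2, rfl⟩
  show sInf _ = _
  rw [hset, csInf_pair]
  rfl

lemma minS_le (s : Fin 8 → ℕ) (v : Fin 8) : minS s ≤ s v := Nat.sInf_le ⟨v, rfl⟩

lemma cMin_le (s : Fin 8 → ℕ) (v : Fin 8) : cMin s ≤ s v := by
  fin_cases v
  · exact min_le_left _ _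
  · exact (min_le_right _ _).trans (min_le_left _ _)
  · exact (min_le_right _ _).trans ((min_le_right _ _).trans (min_le_left _ _))
  · exact (min_le_right _ _).trans ((min_le_right _ _).trans ((min_le_right _ _).trans
      (min_le_left _ _)))
  · exact (min_le_right _ _).trans ((min_le_right _ _).trans ((min_le_right _ _).trans
      ((min_le_right _ _).trans (min_le_left _ _))))
  · exact (min_le_right _ _).trans ((min_le_right _ _).trans ((min_le_right _ _).trans
      ((min_le_right _ _).trans ((min_le_right _ _).trans (min_le_left _ _)))))
  · exact (min_le_right _ _).trans ((min_le_right _ _).trans ((min_le_right _ _).trans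
      ((min_le_right _ _).trans ((min_le_right _ _).trans ((min_le_right _ _).trans
      (min_le_left _ _))))))
  · exact (min_le_right _ _).trans ((min_le_right _ _).trans ((min_le_right _ _).trans
      ((min_le_right _ _).trans ((min_le_right _ _).trans ((min_le_right _ _).trans
      (min_le_right _ _))))))

lemma minS_eq (s : Fin 8 → ℕ) : minS s = cMin s := by
  apply le_antisymm
  · have h0 := minS_le s 0; have h1 := minS_le s 1; have h2 := minS_le s 2
    have h3 := minS_le s 3; have h4 := minS_le s 4; have h5 := minS_le s 5
    have h6 := minS_le s 6; have h7 := minS_le s 7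
    unfold cMin; omega
  · exact le_csInf (Set.range_nonempty s) (by rintro b ⟨v, rfl⟩; exact cMin_le s v)

lemma vop_add (s : Fin 8 → ℕ) (k : ℕ) (a : Fin 4) :
    Vop dbSrc dbDst dbLab (fun v => s v + k) a = fun v => Vop dbSrc dbDst dbLab s a v + k := by
  funext v; rw [vop_eq, vop_eq]; unfold cVop; beta_reduce; omega

lemma minS_add (s : Fin 8 → ℕ) (k : ℕ) : minS (fun v => s v + k) = minS s + k := by
  rw [minS_eq, minS_eq]; simp only [cMin, min_add_add_right]

lemma vop_le (s : Fin 8 → ℕ) (a : Fin 4) (e : Fin 8 × Fin 2) :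
    Vop dbSrc dbDst dbLab s a (dbDst e) ≤ s (dbSrc e) + ham a (dbLab e) :=
  Nat.sInf_le ⟨e, rfl, rfl⟩

lemma vop_attain (s : Fin 8 → ℕ) (a : Fin 4) (v : Fin 8) :
    ∃ e, dbDst e = v ∧ Vop dbSrc dbDst dbLab s a v = s (dbSrc e) + ham a (dbLab e) := by
  rw [vop_eq]
  rcases le_total (s (e1 v).1 + ham a (dbLab (e1 v))) (s (e2 v).1 + ham a (dbLab (e2 v))) with h | h
  · exact ⟨e1 v, (Gd1 v).1, by unfold cVop; exact min_eq_left h⟩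
  · exact ⟨e2 v, (Gd1 v).2, by unfold cVop; exact min_eq_right h⟩

end Theory

open Finset

lemma vseq_succ (x : ℕ → Fin 4) (n : ℕ) :
    VSeq dbSrc dbDst dbLab x (n + 1) = Vop dbSrc dbDst dbLab (VSeq dbSrc dbDst dbLab x n) (x n) :=
  rfl

lemma vseq_zero (x : ℕ → Fin 4) : VSeq dbSrc dbDst dbLab x 0 = fun _ => 0 := rfl

lemma lemA (x : ℕ → Fin 4) : ∀ n (e : ℕ → Fin 8 × Fin 2), EdgeChain dbSrc dbDst (n + 1) e →
    VSeq dbSrc dbDst dbLab x (n + 1) (dbDst (e n)) ≤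
      ∑ i ∈ Finset.range (n + 1), ham (x i) (dbLab (e i)) := by
  intro n
  induction n with
  | zero =>
    intro e _
    have h := vop_le (VSeq dbSrc dbDst dbLab x 0) (x 0) (e 0)
    rw [vseq_zero] at h
    simpa [Finset.sum_range_one, vseq_succ, vseq_zero] using h
  | succ n ih =>
    intro e hch
    have hlink : dbDst (e n) = dbSrc (e (n + 1)) := hch n (by omega)
    have h1 := vop_le (VSeq dbSrc dbDst dbLab x (n + 1)) (x (n + 1)) (e (n + 1))
    rw [← hlink] at h1
    have h2 := ih e (fun i hi => hch i (by omega))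
    rw [Finset.sum_range_succ, vseq_succ]
    calc Vop dbSrc dbDst dbLab (VSeq dbSrc dbDst dbLab x (n + 1)) (x (n + 1)) (dbDst (e (n + 1)))
        ≤ VSeq dbSrc dbDst dbLab x (n + 1) (dbDst (e n)) + ham (x (n + 1)) (dbLab (e (n + 1))) := h1
      _ ≤ _ := by omega

lemma lemB (x : ℕ → Fin 4) : ∀ n (v : Fin 8), ∃ e : ℕ → Fin 8 × Fin 2,
    EdgeChain dbSrc dbDst (n + 1) e ∧ dbDst (e n) = v ∧
    ∑ i ∈ Finset.range (n + 1), ham (x i) (dbLab (e i)) = VSeq dbSrc dbDst dbLab x (n + 1) v := by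
  intro n
  induction n with
  | zero =>
    intro v
    obtain ⟨ε, hd, hv⟩ := vop_attain (VSeq dbSrc dbDst dbLab x 0) (x 0) v
    refine ⟨fun _ => ε, fun i hi => absurd hi (by omega), hd, ?_⟩
    simpa [vseq_succ, vseq_zero, Finset.sum_range_one] using hv.symm
  | succ n ih =>
    intro v
    obtain ⟨ε, hd, hv⟩ := vop_attain (VSeq dbSrc dbDst dbLab x (n + 1)) (x (n + 1)) v
    obtain ⟨e, hch, hend, hsum⟩ := ih (dbSrc ε)
    refine ⟨fun i => if i < n + 1 then e i else ε, ?_, ?_, ?_⟩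
    · intro i hi
      by_cases h : i + 1 < n + 1
      · simp only [if_pos h, if_pos (by omega : i < n + 1)]
        exact hch i h
      · have hieq : i = n := by omega
        simp only [hieq, if_pos (by omega : n < n + 1), if_neg (by omega : ¬ n + 1 < n + 1)]
        rw [hend]
    · simp only [if_neg (by omega : ¬ n + 1 < n + 1)]
      exact hd
    · rw [Finset.sum_range_succ]
      have hcongr : ∑ i ∈ Finset.range (n + 1),
          ham (x i) (dbLab (if i < n + 1 then e i else ε)) =
          ∑ i ∈ Finset.range (n + 1), ham (x i) (dbLab (e i)) := by
        refine Finset.sum_congr rfl fun i hi => ?_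
        rw [if_pos (Finset.mem_range.mp hi)]
      beta_reduce
      rw [hcongr, hsum, if_neg (by omega : ¬ n + 1 < n + 1)]
      conv_rhs => rw [vseq_succ]
      exact hv.symm

lemma sum_fin_conv {n : ℕ} (x : Fin n → Fin 4) (xe : ℕ → Fin 4)
    (hx : ∀ i : Fin n, xe i.1 = x i) (e : ℕ → Fin 8 × Fin 2) :
    ∑ i : Fin n, ham (x i) (dbLab (e i.1)) =
      ∑ i ∈ Finset.range n, ham (xe i) (dbLab (e i)) := by
  rw [← Fin.sum_univ_eq_sum_range (fun j => ham (xe j) (dbLab (e j))) n]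
  exact Finset.sum_congr rfl fun i _ => by rw [hx i]

lemma minDist_eq_minS (n : ℕ) (x : Fin (n + 1) → Fin 4) (xe : ℕ → Fin 4)
    (hx : ∀ i : Fin (n + 1), xe i.1 = x i) :
    minDist dbSrc dbDst dbLab (n + 1) x = minS (VSeq dbSrc dbDst dbLab xe (n + 1)) := by
  apply le_antisymm
  · obtain ⟨v, hv⟩ : ∃ v, VSeq dbSrc dbDst dbLab xe (n + 1) v =
        minS (VSeq dbSrc dbDst dbLab xe (n + 1)) :=
      Nat.sInf_mem (Set.range_nonempty _)
    obtain ⟨e, hch, hend, hsum⟩ := lemB xe n v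
    apply Nat.sInf_le
    refine ⟨e, hch, ?_⟩
    rw [sum_fin_conv x xe hx e, hsum, hv]
  · have hne : {m : ℕ | ∃ e, EdgeChain dbSrc dbDst (n + 1) e ∧
        m = ∑ i : Fin (n + 1), ham (x i) (dbLab (e i.1))}.Nonempty := by
      obtain ⟨e, hch, _, _⟩ := lemB xe n 0
      exact ⟨_, e, hch, rfl⟩
    obtain ⟨e, hch, hsum⟩ := Nat.sInf_mem hne
    calc minS (VSeq dbSrc dbDst dbLab xe (n + 1))
        ≤ VSeq dbSrc dbDst dbLab xe (n + 1) (dbDst (e n)) := minS_le _ _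
      _ ≤ ∑ i ∈ Finset.range (n + 1), ham (xe i) (dbLab (e i)) := lemA xe n e hch
      _ = minDist dbSrc dbDst dbLab (n + 1) x := by
          rw [← sum_fin_conv x xe hx e]
          exact hsum.symm

lemma minDist_zero (x : Fin 0 → Fin 4) : minDist dbSrc dbDst dbLab 0 x = 0 := by
  have h : (0 : ℕ) ∈ {m : ℕ | ∃ e : ℕ → Fin 8 × Fin 2, EdgeChain dbSrc dbDst 0 e ∧
      m = ∑ i : Fin 0, ham (x i) (dbLab (e i.1))} :=
    ⟨fun _ => ((0 : Fin 8), (0 : Fin 2)), fun i hi => absurd hi (by omega), by simp⟩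
  exact le_antisymm (Nat.sInf_le h) (Nat.zero_le _)

open Finset

def zeroS : Fin 8 → ℕ := fun _ => 0

noncomputable def W : (Fin 8 → ℕ) → List (Fin 4) → ℕ
  | _, [] => 0
  | s, a :: l => minS (Vop dbSrc dbDst dbLab s a) + W (Vred dbSrc dbDst dbLab s a) l

lemma W_append (l : List (Fin 4)) : ∀ (s : Fin 8 → ℕ) (a : Fin 4),
    W s (l ++ [a]) = W s l +
      minS (Vop dbSrc dbDst dbLab (l.foldl (Vred dbSrc dbDst dbLab) s) a) := by
  induction l with
  | nil => intro s a; simp [W]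
  | cons b l ih =>
    intro s a
    simp only [List.cons_append, W, List.foldl_cons]
    rw [ih, Nat.add_assoc]

lemma sred_zero (x : ℕ → Fin 4) : SredSeq dbSrc dbDst dbLab x 0 = zeroS := by
  funext v
  simp [SredSeq, vseq_zero, minS_eq, cMin, zeroS]

lemma vseq_decomp (x : ℕ → Fin 4) (n : ℕ) :
    VSeq dbSrc dbDst dbLab x n = fun v =>
      SredSeq dbSrc dbDst dbLab x n v + minS (VSeq dbSrc dbDst dbLab x n) := by
  funext v
  have h := minS_le (VSeq dbSrc dbDst dbLab x n) v
  simp only [SredSeq]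
  omega

lemma vseq_W (x : ℕ → Fin 4) : ∀ n : ℕ,
    minS (VSeq dbSrc dbDst dbLab x n) = W zeroS (List.ofFn fun i : Fin n => x i.1) ∧
    SredSeq dbSrc dbDst dbLab x n =
      (List.ofFn fun i : Fin n => x i.1).foldl (Vred dbSrc dbDst dbLab) zeroS := by
  intro n
  induction n with
  | zero =>
    constructor
    · rw [vseq_zero]
      show minS zeroS = W zeroS (List.ofFn fun i : Fin 0 => x i.1)
      rw [List.ofFn_zero, minS_eq]
      rfl
    · rw [sred_zero, List.ofFn_zero, List.foldl_nil]
  | succ n ih =>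
    obtain ⟨ih1, ih2⟩ := ih
    have hofn : (List.ofFn fun i : Fin (n + 1) => x i.1) =
        (List.ofFn fun i : Fin n => x i.1) ++ [x n] := by
      rw [List.ofFn_succ']
      simp [List.concat_eq_append]
    have hvs : VSeq dbSrc dbDst dbLab x (n + 1) = fun v =>
        Vop dbSrc dbDst dbLab (SredSeq dbSrc dbDst dbLab x n) (x n) v +
          minS (VSeq dbSrc dbDst dbLab x n) := by
      conv_lhs => rw [vseq_succ, vseq_decomp x n, vop_add]
    have hmin : minS (VSeq dbSrc dbDst dbLab x (n + 1)) =
        minS (Vop dbSrc dbDst dbLab (SredSeq dbSrc dbDst dbLab x n) (x n)) +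
          minS (VSeq dbSrc dbDst dbLab x n) := by
      rw [hvs, minS_add]
    constructor
    · rw [hmin, hofn, W_append, ← ih2, ih1]
      omega
    · funext v
      have h1 := minS_le (Vop dbSrc dbDst dbLab (SredSeq dbSrc dbDst dbLab x n) (x n)) v
      simp only [SredSeq, hmin]
      rw [hofn, List.foldl_append, ← ih2]
      simp only [List.foldl_cons, List.foldl_nil, Vred]
      have h2 : VSeq dbSrc dbDst dbLab x (n + 1) v =
          Vop dbSrc dbDst dbLab (SredSeq dbSrc dbDst dbLab x n) (x n) v +
            minS (VSeq dbSrc dbDst dbLab x n) := by rw [hvs]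
      omega

lemma minDist_W (n : ℕ) (x : Fin n → Fin 4) :
    minDist dbSrc dbDst dbLab n x = W zeroS (List.ofFn x) := by
  cases n with
  | zero => simp [minDist_zero, List.ofFn_zero, W]
  | succ n =>
    set xe : ℕ → Fin 4 := fun i => if h : i < n + 1 then x ⟨i, h⟩ else 0 with hxe
    have hx : ∀ i : Fin (n + 1), xe i.1 = x i := by
      intro i; simp [hxe, i.isLt]
      intro h; exact absurd h (by have := i.isLt; omega)
    rw [minDist_eq_minS n x xe hx, (vseq_W xe (n + 1)).1]
    exact congrArg (W zeroS) (congrArg List.ofFn (funext hx))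

open Finset

noncomputable def ET (n : ℕ) (s : Fin 8 → ℕ) : ℝ :=
  ∑ f : Fin n → Fin 4, (1 / 4 : ℝ) ^ n * (W s (List.ofFn f) : ℝ)

lemma ET_zero (s : Fin 8 → ℕ) : ET 0 s = 0 := by
  simp [ET, W]

lemma ET_succ (n : ℕ) (s : Fin 8 → ℕ) :
    ET (n + 1) s = ∑ a : Fin 4, (1 / 4 : ℝ) *
      ((minS (Vop dbSrc dbDst dbLab s a) : ℝ) + ET n (Vred dbSrc dbDst dbLab s a)) := by
  have hcomp := Equiv.sum_comp (Fin.consEquiv (fun _ : Fin (n + 1) => Fin 4))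
      (fun f => (1 / 4 : ℝ) ^ (n + 1) * (W s (List.ofFn f) : ℝ))
  rw [ET, ← hcomp, Fintype.sum_prod_type]
  apply Finset.sum_congr rfl
  intro a _
  have hofn : ∀ g : Fin n → Fin 4,
      List.ofFn (Fin.cons a g : ∀ _ : Fin (n + 1), Fin 4) = a :: List.ofFn g := by
    intro g
    simp [List.ofFn_succ]
  have h4 : (4 : ℝ) ^ n * (1 / 4 : ℝ) ^ (n + 1) = 1 / 4 := by
    rw [pow_succ, ← mul_assoc, ← mul_pow]
    norm_num
  calc ∑ g : Fin n → Fin 4, (1 / 4 : ℝ) ^ (n + 1) *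
        (W s (List.ofFn ((Fin.consEquiv fun _ : Fin (n + 1) => Fin 4) (a, g))) : ℝ)
      = ∑ g : Fin n → Fin 4, ((1 / 4 : ℝ) ^ (n + 1) *
          (minS (Vop dbSrc dbDst dbLab s a) : ℝ) +
          (1 / 4 : ℝ) * ((1 / 4 : ℝ) ^ n * (W (Vred dbSrc dbDst dbLab s a) (List.ofFn g) : ℝ))) := by
        apply Finset.sum_congr rfl
        intro g _
        have : (Fin.consEquiv fun _ : Fin (n + 1) => Fin 4) (a, g) = Fin.cons a g := rfl
        rw [this, hofn g]
        simp only [W]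
        push_cast
        ring
    _ = (1 / 4 : ℝ) * ((minS (Vop dbSrc dbDst dbLab s a) : ℝ) +
          ET n (Vred dbSrc dbDst dbLab s a)) := by
        have hcard : ((Finset.univ : Finset (Fin n → Fin 4)).card : ℝ) = (4 : ℝ) ^ n := by
          simp [Finset.card_univ]
        rw [Finset.sum_add_distrib, Finset.sum_const, ← Finset.mul_sum, ← ET, nsmul_eq_mul, hcard]
        linear_combination (minS (Vop dbSrc dbDst dbLab s a) : ℝ) * h4

lemma fact_g (i : Fin 107) (a : Fin 4) :
    minS (Vop dbSrc dbDst dbLab (psiF i) a) = gF i a := by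
  rw [vop_eq, minS_eq]; exact F2 i a

lemma fact_tr (i : Fin 107) (a : Fin 4) :
    Vred dbSrc dbDst dbLab (psiF i) a = psiF (trF i a) := by
  funext v
  show Vop dbSrc dbDst dbLab (psiF i) a v - minS (Vop dbSrc dbDst dbLab (psiF i) a) = _
  rw [vop_eq, minS_eq]
  exact F1 i a v

noncomputable def hRf : Fin 107 → ℝ := fun i => (HF i : ℝ) / 1809

lemma hRf_bounds (i : Fin 107) : 0 ≤ hRf i ∧ hRf i ≤ 1581 / 1809 := by
  constructor
  · simp only [hRf]
    positivity
  · have h : (HF i : ℝ) ≤ 1581 := by exact_mod_cast F5 i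
    rw [hRf]
    linarith

lemma main_bound : ∀ (n : ℕ) (i : Fin 107),
    |ET n (psiF i) - n * (452 / 1809 : ℝ) - hRf i| ≤ 1581 / 1809 := by
  intro n
  induction n with
  | zero =>
    intro i
    rw [ET_zero]
    obtain ⟨hp, hb⟩ := hRf_bounds i
    rw [abs_le]
    push_cast
    constructor <;> linarith
  | succ n ih =>
    intro i
    have hrec := ET_succ n (psiF i)
    simp only [fact_g, fact_tr] at hrec
    rw [Fin.sum_univ_four] at hrec
    have h0 := ih (trF i 0); have h1 := ih (trF i 1)
    have h2 := ih (trF i 2); have h3 := ih (trF i 3)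
    have hp : (4 * (HF i : ℝ) + 1808) =
        1809 * ((gF i 0 : ℝ) + gF i 1 + gF i 2 + gF i 3) +
        ((HF (trF i 0) : ℝ) + HF (trF i 1) + HF (trF i 2) + HF (trF i 3)) := by
      exact_mod_cast congrArg (Nat.cast (R := ℝ)) (F4 i)
    have key : ET (n + 1) (psiF i) - ((n : ℕ) + 1 : ℕ) * (452 / 1809 : ℝ) - hRf i
        = (1 / 4) * ((ET n (psiF (trF i 0)) - n * (452 / 1809) - hRf (trF i 0))
          + (ET n (psiF (trF i 1)) - n * (452 / 1809) - hRf (trF i 1))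
          + (ET n (psiF (trF i 2)) - n * (452 / 1809) - hRf (trF i 2))
          + (ET n (psiF (trF i 3)) - n * (452 / 1809) - hRf (trF i 3))) := by
      rw [hrec]
      simp only [hRf]
      push_cast
      linear_combination (-1 / 7236 : ℝ) * hp
    rw [key]
    rw [abs_le] at h0 h1 h2 h3 ⊢
    constructor <;> linarith

open Finset Filter

lemma aSeq_eq_ET (n : ℕ) :
    aSeq dbSrc dbDst dbLab (fun _ => (1 / 4 : ℝ)) n = ET n zeroS := by
  unfold aSeq ET
  apply Finset.sum_congr rfl
  intro x _
  rw [minDist_W n x, Finset.prod_const, Finset.card_univ, Fintype.card_fin]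

lemma abs_aSeq_bound (n : ℕ) :
    |aSeq dbSrc dbDst dbLab (fun _ => (1 / 4 : ℝ)) n - n * (452 / 1809 : ℝ)| ≤ 2 := by
  have h := main_bound n 0
  have hpsi0 : psiF 0 = zeroS := funext F3
  rw [hpsi0] at h
  rw [aSeq_eq_ET n]
  obtain ⟨hp, hb⟩ := hRf_bounds 0
  rw [abs_le] at h ⊢
  constructor <;> [linarith; linarith]

open Filter in
theorem deBruijn_distortion_eq' :
    Tendsto (fun n : ℕ => aSeq dbSrc dbDst dbLab (fun _ => (1 / 4 : ℝ)) n / n)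
      atTop (nhds (452 / 1809)) := by
  have hzero : Tendsto (fun n : ℕ =>
      aSeq dbSrc dbDst dbLab (fun _ => (1 / 4 : ℝ)) n / n - 452 / 1809) atTop (nhds 0) := by
    apply squeeze_zero_norm' (a := fun n : ℕ => 2 / n)
    · refine eventually_atTop.2 ⟨1, fun n hn => ?_⟩
      have hn0 : (0 : ℝ) < n := by
        have : (1 : ℕ) ≤ n := hn
        exact_mod_cast Nat.lt_of_lt_of_le Nat.zero_lt_one this
      have hdiv : aSeq dbSrc dbDst dbLab (fun _ => (1 / 4 : ℝ)) n / n - 452 / 1809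
          = (aSeq dbSrc dbDst dbLab (fun _ => (1 / 4 : ℝ)) n - n * (452 / 1809)) / n := by
        field_simp
      rw [Real.norm_eq_abs, hdiv, abs_div, abs_of_pos hn0]
      exact (div_le_div_iff_of_pos_right hn0).mpr (abs_aSeq_bound n)
    · exact tendsto_const_div_atTop_nhds_zero_nat 2
  have := hzero.add (tendsto_const_nhds (x := (452 / 1809 : ℝ)))
  simpa using this

open Filter in
/-- For the labelled de Bruijn graph of size 8 and the i.i.d. source
uniformly distributed on `A = {a,b,c,d}`, the asymptotic expected Hamming distortion
per sample is `D(G) = lim_{n→∞} a_n / n = 452/1809`. -/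
theorem deBruijn_distortion_eq :
    Tendsto (fun n : ℕ => aSeq dbSrc dbDst dbLab (fun _ => (1 / 4 : ℝ)) n / n)
      atTop (nhds (452 / 1809)) := by
  exact deBruijn_distortion_eq'
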